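/- (Lemma 4.2, canonical decomposition of Δf.) Let A be an integral domain of characteristic p > 0 and f ∈ A[X] with f(0) = 0, m := deg f ≥ 1 and p ∤ m; set Δf(X,Y) := f(X+Y) − f(X) − f(Y) ∈ A[X,Y]. Then there exists a unique pair (F, P) of polynomials in A[X,Y] such that: (a) Δf(X,Y) = F(X,Y) + P(X,Y) − P(X,Y)^p; (b) every monomial X^e Y^j occurring in F satisfies e < m ≤ p·e (equivalently e = i·p^{n(i)} with p ∤ i and n(i) maximal such that i·p^{n(i)} < m); (c) every monomial occurring in P has X-degree at least 1. Moreover this P automatically satisfies deg_X P ≤ ⌊(m−1)/p⌋. -/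

import Mathlib

open Polynomial

namespace DeltaAux

variable {A : Type*} [CommRing A]

noncomputable def lowc (d : ℕ) (c : A[X]) : A[X] :=
  ∑ e ∈ Finset.Ioc 0 d, Polynomial.monomial e (c.coeff e)

lemma lowc_coeff (d : ℕ) (c : A[X]) (n : ℕ) :
    (lowc d c).coeff n = if 0 < n ∧ n ≤ d then c.coeff n else 0 := by
  rw [lowc, finset_sum_coeff]
  simp only [coeff_monomial]
  rw [Finset.sum_ite_eq' (Finset.Ioc 0 d) n (fun e => c.coeff e)]
  simp [Finset.mem_Ioc]

noncomputable def low (d : ℕ) (g : Polynomial A[X]) : Polynomial A[X] :=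
  ∑ j ∈ g.support, Polynomial.monomial j (lowc d (g.coeff j))

lemma low_coeff (d : ℕ) (g : Polynomial A[X]) (j : ℕ) :
    (low d g).coeff j = lowc d (g.coeff j) := by
  rw [low, finset_sum_coeff]
  simp only [coeff_monomial]
  rw [Finset.sum_ite_eq' g.support j (fun i => lowc d (g.coeff i))]
  split_ifs with h
  · rfl
  · rw [notMem_support_iff.mp h]
    simp [lowc]

noncomputable def seq (p d : ℕ) (g : Polynomial A[X]) : ℕ → Polynomial A[X] :=
  fun k => Nat.rec (low d g) (fun _ ih => low d (ih ^ p)) k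

lemma seq_zero (p d : ℕ) (g : Polynomial A[X]) : seq p d g 0 = low d g := rfl

lemma seq_succ (p d : ℕ) (g : Polynomial A[X]) (k : ℕ) :
    seq p d g (k + 1) = low d (seq p d g k ^ p) := rfl

lemma pow_char_coeff {R : Type*} [CommRing R] {p : ℕ} (hp : p.Prime) [CharP R p]
    (Q : R[X]) (n : ℕ) :
    (Q ^ p).coeff n = if p ∣ n then (Q.coeff (n / p)) ^ p else 0 := by
  haveI := Fact.mk hp
  rw [← Polynomial.map_frobenius_expand p Q, coeff_map, Polynomial.coeff_expand hp.pos]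
  split_ifs
  · rfl
  · exact map_zero _

lemma pow_char_coeff2 {p : ℕ} (hp : p.Prime) [CharP A p]
    (Q : Polynomial A[X]) (j e : ℕ) :
    ((Q ^ p).coeff j).coeff e =
      if p ∣ j ∧ p ∣ e then ((Q.coeff (j / p)).coeff (e / p)) ^ p else 0 := by
  rw [pow_char_coeff hp]
  by_cases hj : p ∣ j
  · rw [if_pos hj, pow_char_coeff hp]
    by_cases he : p ∣ e
    · rw [if_pos he, if_pos ⟨hj, he⟩]
    · rw [if_neg he, if_neg (fun h => he h.2)]
  · rw [if_neg hj, if_neg (fun h => hj h.1), coeff_zero]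

lemma hasseDeriv_map' (f : A[X]) (j : ℕ) :
    hasseDeriv j (f.map (C : A →+* A[X])) = (hasseDeriv j f).map C := by
  ext n
  rw [hasseDeriv_coeff, coeff_map, coeff_map, hasseDeriv_coeff, map_mul, map_natCast]

lemma Dcoeff (f : A[X]) (j e : ℕ) :
    ((((f.map C).comp ((C X : Polynomial A[X]) + X)) - C f - f.map C).coeff j).coeff e =
      ((e + j).choose j : A) * f.coeff (e + j)
        - (if j = 0 then f.coeff e else 0) - (if e = 0 then f.coeff j else 0) := by
  have h1 : (f.map (C : A →+* A[X])).comp ((C X : Polynomial A[X]) + X)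
      = taylor X (f.map C) := by
    rw [taylor_apply, add_comm]
  have h2 : (((f.map C).comp ((C X : Polynomial A[X]) + X)) - C f - f.map C).coeff j
      = hasseDeriv j f - (if j = 0 then f else 0) - C (f.coeff j) := by
    rw [coeff_sub, coeff_sub, h1, taylor_coeff, hasseDeriv_map', eval_map, eval₂_C_X,
      coeff_C, coeff_map]
  rw [h2, coeff_sub, coeff_sub, hasseDeriv_coeff,
      apply_ite (fun g : A[X] => g.coeff e), coeff_zero, coeff_C]

end DeltaAux


theorem delta_decomposition (p : ℕ) (hp : p.Prime)
    (A : Type*) [CommRing A] [IsDomain A] [CharP A p]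
    (f : A[X]) (hf0 : f.coeff 0 = 0) (m : ℕ) (hm : f.natDegree = m)
    (hm1 : 1 ≤ m) (hpm : ¬ p ∣ m) :
    (∃! FP : Polynomial A[X] × Polynomial A[X],
      ((f.map C).comp ((C X : Polynomial A[X]) + X) - C f - f.map C
          = FP.1 + FP.2 - FP.2 ^ p) ∧
      (∀ j e : ℕ, (FP.1.coeff j).coeff e ≠ 0 → e < m ∧ m ≤ p * e) ∧
      (∀ j : ℕ, (FP.2.coeff j).coeff 0 = 0)) ∧
    (∀ FP : Polynomial A[X] × Polynomial A[X],
      ((f.map C).comp ((C X : Polynomial A[X]) + X) - C f - f.map C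
          = FP.1 + FP.2 - FP.2 ^ p) →
      (∀ j e : ℕ, (FP.1.coeff j).coeff e ≠ 0 → e < m ∧ m ≤ p * e) →
      (∀ j : ℕ, (FP.2.coeff j).coeff 0 = 0) →
      ∀ j : ℕ, (FP.2.coeff j).natDegree ≤ (m - 1) / p) := by
  classical
  haveI := Fact.mk hp
  set d : ℕ := (m - 1) / p with hd
  set D : Polynomial A[X] := (f.map C).comp ((C X : Polynomial A[X]) + X) - C f - f.map C
    with hDdef
  set Q : ℕ → Polynomial A[X] := DeltaAux.seq p d D with hQdef
  set P : Polynomial A[X] := ∑ k ∈ Finset.range (d + 1), Q k with hPdef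
  set F : Polynomial A[X] := D - P + P ^ p with hFdef
  have hd_le : p * d ≤ m - 1 := by rw [hd, mul_comm]; exact Nat.div_mul_le_self _ _
  have hdm : d < m := lt_of_le_of_lt (Nat.div_le_self _ _) (Nat.sub_lt hm1 one_pos)
  have hD0 : ∀ j, (D.coeff j).coeff 0 = 0 := by
    intro j
    rw [hDdef, DeltaAux.Dcoeff]
    by_cases hj : j = 0
    · subst hj; simp [hf0]
    · simp [hj, Nat.choose_self]
  have hDhigh : ∀ j e, m ≤ e → (D.coeff j).coeff e = 0 := by
    intro j e he
    rw [hDdef, DeltaAux.Dcoeff]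
    have h0 : e ≠ 0 := by omega
    by_cases hj : j = 0
    · subst hj; simp [h0]
    · have hz : f.coeff (e + j) = 0 := coeff_eq_zero_of_natDegree_lt (by rw [hm]; omega)
      simp [hj, h0, hz]
  have hQc0 : ∀ k j e, ¬(0 < e ∧ e ≤ d) → ((Q k).coeff j).coeff e = 0 := by
    intro k j e he
    cases k with
    | zero => rw [hQdef, DeltaAux.seq_zero, DeltaAux.low_coeff, DeltaAux.lowc_coeff, if_neg he]
    | succ k => rw [hQdef, DeltaAux.seq_succ, DeltaAux.low_coeff, DeltaAux.lowc_coeff, if_neg he]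
  have hQmin : ∀ k j e, e < p ^ k → ((Q k).coeff j).coeff e = 0 := by
    intro k
    induction k with
    | zero => intro j e he; exact hQc0 0 j e (by simp at he; omega)
    | succ k ih =>
      intro j e he
      rw [hQdef, DeltaAux.seq_succ, DeltaAux.low_coeff, DeltaAux.lowc_coeff]
      split_ifs with h
      · rw [← hQdef, DeltaAux.pow_char_coeff2 hp]
        split_ifs with h2
        · rw [ih (j / p) (e / p)
            ((Nat.div_lt_iff_lt_mul hp.pos).mpr (by rw [← pow_succ]; exact he)),
            zero_pow hp.ne_zero]
        · rfl
      · rfl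
  have hQtop : ∀ j e, ((Q (d + 1)).coeff j).coeff e = 0 := by
    intro j e
    by_cases hle : e ≤ d
    · refine hQmin (d + 1) j e (lt_of_le_of_lt hle ?_)
      calc d < 2 ^ (d + 1) :=
            lt_of_lt_of_le ((Nat.lt_two_pow_self (n := d))) (Nat.pow_le_pow_right (by norm_num) (Nat.le_succ d))
        _ ≤ p ^ (d + 1) := Nat.pow_le_pow_left hp.two_le _
    · exact hQc0 _ _ _ (fun h => hle h.2)
  have hPco : ∀ j e, (P.coeff j).coeff e
      = ∑ k ∈ Finset.range (d + 1), ((Q k).coeff j).coeff e := by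
    intro j e
    rw [hPdef, finset_sum_coeff, finset_sum_coeff]
  have hPhigh : ∀ j e, ¬(0 < e ∧ e ≤ d) → (P.coeff j).coeff e = 0 := by
    intro j e he
    rw [hPco]
    exact Finset.sum_eq_zero fun k _ => hQc0 k j e he
  have hPpow : ∀ j e, ((P ^ p).coeff j).coeff e =
      if p ∣ j ∧ p ∣ e then ((P.coeff (j / p)).coeff (e / p)) ^ p else 0 :=
    fun j e => DeltaAux.pow_char_coeff2 hp P j e
  have hcoeF : ∀ j e, (F.coeff j).coeff e
      = (D.coeff j).coeff e - (P.coeff j).coeff e + ((P ^ p).coeff j).coeff e := by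
    intro j e; rw [hFdef, coeff_add, coeff_sub, coeff_add, coeff_sub]
  have hFlow : ∀ j e, e ≤ d → (F.coeff j).coeff e = 0 := by
    intro j e hed
    by_cases he : e = 0
    · subst he
      rw [hcoeF, hD0, hPhigh j 0 (by simp), hPpow]
      split_ifs with h
      · rw [hPhigh (j / p) (0 / p) (by simp), zero_pow hp.ne_zero]; ring
      · ring
    · have hepos : 0 < e := Nat.pos_of_ne_zero he
      have hQ0c : ((Q 0).coeff j).coeff e = (D.coeff j).coeff e := by
        rw [hQdef, DeltaAux.seq_zero, DeltaAux.low_coeff, DeltaAux.lowc_coeff,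
          if_pos ⟨hepos, hed⟩]
      have hQsc : ∀ k, ((Q (k + 1)).coeff j).coeff e = ((Q k ^ p).coeff j).coeff e := by
        intro k
        rw [hQdef, DeltaAux.seq_succ, DeltaAux.low_coeff, DeltaAux.lowc_coeff,
          if_pos ⟨hepos, hed⟩, ← hQdef]
      have hPpc : ((P ^ p).coeff j).coeff e
          = ∑ k ∈ Finset.range (d + 1), ((Q (k + 1)).coeff j).coeff e := by
        rw [hPdef, sum_pow_char, finset_sum_coeff, finset_sum_coeff]
        exact Finset.sum_congr rfl fun k _ => (hQsc k).symm
      have e1 := Finset.sum_range_succ' (fun k => ((Q k).coeff j).coeff e) (d + 1)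
      have e2 := Finset.sum_range_succ (fun k => ((Q k).coeff j).coeff e) (d + 1)
      rw [hcoeF, hPco, hPpc]
      have h3 : ∑ k ∈ Finset.range (d + 1), ((Q (k + 1)).coeff j).coeff e
          = ∑ k ∈ Finset.range (d + 1), ((Q k).coeff j).coeff e
            - ((Q 0).coeff j).coeff e + ((Q (d + 1)).coeff j).coeff e := by
        linear_combination e2 - e1
      rw [h3, hQ0c, hQtop]
      ring
  have hFcond : ∀ j e, (F.coeff j).coeff e ≠ 0 → e < m ∧ m ≤ p * e := by
    intro j e hne
    by_contra hcon
    push_neg at hcon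
    apply hne
    by_cases hem : e < m
    · have hpe : p * e < m := hcon hem
      have hed : e ≤ d := by
        rw [hd, Nat.le_div_iff_mul_le hp.pos, mul_comm]
        omega
      exact hFlow j e hed
    · have hme : m ≤ e := le_of_not_gt hem
      rw [hcoeF, hDhigh j e hme, hPhigh j e (fun hc => absurd hc.2 (by omega)), hPpow]
      split_ifs with h
      · have hnd : ¬(0 < e / p ∧ e / p ≤ d) := by
          rintro ⟨-, hle⟩
          have h2 : e = p * (e / p) := (Nat.mul_div_cancel' h.2).symm
          have h3 : p * (e / p) ≤ p * d := Nat.mul_le_mul_left p hle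
          omega
        rw [hPhigh _ _ hnd, zero_pow hp.ne_zero]
        ring
      · ring
  have hPzero : ∀ j, (P.coeff j).coeff 0 = 0 := fun j => hPhigh j 0 (by simp)
  have hEq : D = F + P - P ^ p := by rw [hFdef]; ring
  have hPdeg : ∀ j, (P.coeff j).natDegree ≤ d := fun j =>
    natDegree_le_iff_coeff_eq_zero.mpr fun N hN =>
      hPhigh j N (fun hc => absurd hc.2 (by omega))
  have huniq : ∀ FP : Polynomial A[X] × Polynomial A[X],
      (D = FP.1 + FP.2 - FP.2 ^ p) →
      (∀ j e, (FP.1.coeff j).coeff e ≠ 0 → e < m ∧ m ≤ p * e) →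
      (∀ j, (FP.2.coeff j).coeff 0 = 0) →
      FP = (F, P) := by
    rintro ⟨F', P'⟩ heq' hcond' hzero'
    simp only at heq' hcond' hzero' ⊢
    have hPP : P' = P := by
      by_contra hne
      set G : Polynomial A[X] := P' - P with hG
      have hGne : G ≠ 0 := sub_ne_zero.mpr hne
      have hsub : F - F' = G - G ^ p := by
        rw [hG, sub_pow_char]
        linear_combination heq' - hEq
      have hGc : ∀ j e, ((G - G ^ p).coeff j).coeff e ≠ 0 → e < m ∧ m ≤ p * e := by
        intro j e hne2
        rw [← hsub, coeff_sub, coeff_sub] at hne2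
        by_cases h1 : (F.coeff j).coeff e = 0
        · refine hcond' j e fun h2 => hne2 ?_
          rw [h1, h2]; ring
        · exact hFcond j e h1
      have hG0 : ∀ j, (G.coeff j).coeff 0 = 0 := by
        intro j; rw [hG, coeff_sub, coeff_sub, hzero' j, hPzero j, sub_self]
      have hex : ∃ n, ∃ j, (G.coeff j).coeff n ≠ 0 := by
        obtain ⟨j, hj⟩ : ∃ j, G.coeff j ≠ 0 := by
          by_contra hall; push_neg at hall
          exact hGne (Polynomial.ext fun j => by rw [hall j, coeff_zero])
        obtain ⟨n, hn⟩ : ∃ n, (G.coeff j).coeff n ≠ 0 := by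
          by_contra hall; push_neg at hall
          exact hj (Polynomial.ext fun n => by rw [hall n, coeff_zero])
        exact ⟨n, j, hn⟩
      set n := Nat.find hex with hn
      have hspec := Nat.find_spec hex
      rw [← hn] at hspec
      obtain ⟨j₀, hj₀⟩ := hspec
      have hmin : ∀ k, k < n → ∀ j, (G.coeff j).coeff k = 0 := by
        intro k hk j
        rw [hn] at hk
        have := Nat.find_min hex hk
        push_neg at this
        exact this j
      have hn1 : 1 ≤ n := by
        by_contra h
        push_neg at h
        have hn0 : n = 0 := by omega
        exact hj₀ (hn0 ▸ hG0 j₀)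
      have hmn : m ≤ p * n := by
        have hc : ((G - G ^ p).coeff j₀).coeff n ≠ 0 := by
          rw [coeff_sub, coeff_sub, DeltaAux.pow_char_coeff2 hp]
          split_ifs with h
          · have hlt : n / p < n := Nat.div_lt_self (by omega) hp.one_lt
            rw [hmin (n / p) hlt (j₀ / p), zero_pow hp.ne_zero, sub_zero]
            exact hj₀
          · rw [sub_zero]; exact hj₀
        exact (hGc j₀ n hc).2
      obtain ⟨j₁, hj₁s, hmax⟩ := Finset.exists_max_image G.support
        (fun j => (G.coeff j).natDegree) (Polynomial.support_nonempty.mpr hGne)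
      set N := (G.coeff j₁).natDegree with hNdef
      have hj₁ : G.coeff j₁ ≠ 0 := mem_support_iff.mp hj₁s
      have hlead : (G.coeff j₁).coeff N ≠ 0 := leadingCoeff_ne_zero.mpr hj₁
      have hNn : n ≤ N := by rw [hn]; exact Nat.find_le ⟨j₁, hlead⟩
      have hNpos : 1 ≤ N := le_trans hn1 hNn
      have hfinal : ((G - G ^ p).coeff (p * j₁)).coeff (p * N) ≠ 0 := by
        rw [coeff_sub, coeff_sub, DeltaAux.pow_char_coeff2 hp,
          if_pos ⟨dvd_mul_right p j₁, dvd_mul_right p N⟩,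
          Nat.mul_div_cancel_left j₁ hp.pos, Nat.mul_div_cancel_left N hp.pos]
        have hzz : (G.coeff (p * j₁)).coeff (p * N) = 0 := by
          by_cases hs : p * j₁ ∈ G.support
          · apply coeff_eq_zero_of_natDegree_lt
            calc (G.coeff (p * j₁)).natDegree ≤ N := hmax _ hs
              _ < p * N := by nlinarith [hp.two_le]
          · rw [notMem_support_iff.mp hs, coeff_zero]
        rw [hzz, zero_sub, neg_ne_zero]
        exact pow_ne_zero p hlead
      have hlt2 : p * N < m := (hGc _ _ hfinal).1
      have hle2 : p * n ≤ p * N := Nat.mul_le_mul_left p hNn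
      omega
    rw [hPP] at heq'
    have hFF : F' = F := by linear_combination hEq - heq'
    rw [hPP, hFF]
  refine ⟨⟨(F, P), ⟨hEq, hFcond, hPzero⟩, ?_⟩, ?_⟩
  · intro FP h
    exact huniq FP h.1 h.2.1 h.2.2
  · intro FP h1 h2 h3 j
    have h4 := huniq FP h1 h2 h3
    rw [h4]
    exact hPdeg j
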